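/- arXiv:1912.02098 — 3 statements merged into one kernel-verified Lean document; each statement's English description precedes it below -/
import Mathlib

section
/- If operators {φ_y}_{y∈O} ⊆ ℝ^{n×n} satisfy Σ_y φ_yᵀ φ_y = I (the NOOM normalization), then the OOM operators τ_y = φ_y ⊗ φ_y satisfy the OOM normalization σᵀ Σ_y τ_y = σᵀ, where σ = vec(Iₙ) ∈ ℝ^{n²}. -/
open Matrix Kronecker

theorem stmt5 {n : ℕ} {O : Type*} [Fintype O]
    (φ : O → Matrix (Fin n) (Fin n) ℝ)
    (h : ∑ y : O, (φ y)ᵀ * φ y = 1) :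
    Matrix.vecMul (fun p : Fin n × Fin n => if p.1 = p.2 then (1 : ℝ) else 0)
        (∑ y : O, φ y ⊗ₖ φ y) =
      fun p : Fin n × Fin n => if p.1 = p.2 then (1 : ℝ) else 0 := by
  funext p
  obtain ⟨j, j'⟩ := p
  have key : ∀ (j j' : Fin n), ∑ y : O, ∑ i : Fin n, φ y i j * φ y i j'
      = if j = j' then (1 : ℝ) else 0 := by
    intro j j'
    have := congrFun (congrFun h j) j'
    simpa [Matrix.sum_apply, Matrix.mul_apply, Matrix.transpose_apply,
      Matrix.one_apply] using this
  simp only [Matrix.vecMul, dotProduct, Matrix.sum_apply,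
    Matrix.kroneckerMap_apply, Fintype.sum_prod_type]
  rw [← key j j']
  simp only [ite_mul, one_mul, zero_mul, Finset.sum_ite_eq, Finset.mem_univ, if_true]
  exact Finset.sum_comm
end

section
/- Every n-dimensional K-HQMM is an n²-dimensional general OOM: setting σ = vec(Iₙ), τ_y = L_y = Σ_w K̄_{y,w} ⊗ K_{y,w}, and x₀ = vec(ρ₀), the tuple (ℂ^{n²}, (τ_y), x₀, σ) satisfies σ†x₀ = 1, the normalized-marginal condition, and σ† τ_{y_t}⋯τ_{y_1} x₀ ∈ [0,1] for all observation sequences. -/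
open Matrix Kronecker
open scoped ComplexOrder

/-- Column-stacking vectorization: `vecCol M (j, i) = M i j`. -/
def vecCol {n : ℕ} (M : Matrix (Fin n) (Fin n) ℂ) : Fin n × Fin n → ℂ :=
  fun p => M p.2 p.1

-- PSD sum
lemma psd_add {n : Type*} [Fintype n] {A B : Matrix n n ℂ} (hA : A.PosSemidef)
    (hB : B.PosSemidef) : (A + B).PosSemidef := by
  refine ⟨hA.1.add hB.1, fun x => ?_⟩
  exact (hA.add hB).2 x

lemma psd_sum {n ι : Type*} [Fintype n] (s : Finset ι) (f : ι → Matrix n n ℂ)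
    (h : ∀ i ∈ s, (f i).PosSemidef) : (∑ i ∈ s, f i).PosSemidef := by
  classical
  refine Finset.sum_induction f _ (fun a b => psd_add) Matrix.PosSemidef.zero h

lemma psd_trace_nonneg {n : Type*} [Fintype n] [DecidableEq n] {A : Matrix n n ℂ}
    (hA : A.PosSemidef) : 0 ≤ A.trace := by
  rw [Matrix.trace]
  refine Finset.sum_nonneg fun i _ => ?_
  exact hA.diag_nonneg

-- dot with vec of identity = trace
lemma dot_vecCol {n : ℕ} (M : Matrix (Fin n) (Fin n) ℂ) :
    star (vecCol 1) ⬝ᵥ vecCol M = M.trace := by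
  simp [vecCol, dotProduct, Fintype.sum_prod_type, Matrix.one_apply, Matrix.trace,
    Matrix.diag, apply_ite, Finset.sum_ite_eq, eq_comm]

lemma kron_mulVec {n : ℕ} (A : Matrix (Fin n) (Fin n) ℂ) (M : Matrix (Fin n) (Fin n) ℂ) :
    (A.map star ⊗ₖ A).mulVec (vecCol M) = vecCol (A * M * Aᴴ) := by
  funext p
  obtain ⟨a, b⟩ := p
  simp only [vecCol, Matrix.mulVec, dotProduct, Fintype.sum_prod_type,
    Matrix.kroneckerMap_apply, Matrix.map_apply, Matrix.mul_apply, Matrix.conjTranspose_apply,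
    Finset.sum_mul, Finset.mul_sum]
  congr 1; funext c; congr 1; funext d; ring

lemma sum_mulVec' {n ι : Type*} [Fintype n] (s : Finset ι) (f : ι → Matrix n n ℂ)
    (v : n → ℂ) : (∑ i ∈ s, f i).mulVec v = ∑ i ∈ s, (f i).mulVec v := by
  funext p
  simp [Matrix.mulVec, dotProduct, Matrix.sum_apply, Finset.sum_mul]
  rw [Finset.sum_comm]


theorem stmt13 {n m : ℕ} {O : Type*} [Fintype O]
    (K : O → Fin m → Matrix (Fin n) (Fin n) ℂ)
    (hK : ∑ y : O, ∑ w, (K y w)ᴴ * K y w = 1)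
    (ρ₀ : Matrix (Fin n) (Fin n) ℂ) (hρ : ρ₀.PosSemidef) (htr : ρ₀.trace = 1)
    (L : O → Matrix (Fin n × Fin n) (Fin n × Fin n) ℂ)
    (hL : ∀ y, L y = ∑ w, (K y w).map star ⊗ₖ K y w)
    (σ : Fin n × Fin n → ℂ) (hσ : σ = vecCol 1)
    (x₀ : Fin n × Fin n → ℂ) (hx₀ : x₀ = vecCol ρ₀) :
    star σ ⬝ᵥ x₀ = 1 ∧
    (∀ ys : List O,
      star σ ⬝ᵥ (ys.map L).prod.mulVec x₀ =
        ∑ y : O, star σ ⬝ᵥ (L y).mulVec ((ys.map L).prod.mulVec x₀)) ∧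
    (∀ ys : List O,
      (star σ ⬝ᵥ (ys.map L).prod.mulVec x₀).im = 0 ∧
      0 ≤ (star σ ⬝ᵥ (ys.map L).prod.mulVec x₀).re ∧
      (star σ ⬝ᵥ (ys.map L).prod.mulVec x₀).re ≤ 1) := by
  classical
  subst hσ hx₀
  set Φ : O → Matrix (Fin n) (Fin n) ℂ → Matrix (Fin n) (Fin n) ℂ :=
    fun y M => ∑ w, K y w * M * (K y w)ᴴ with hΦ
  set P : List O → Matrix (Fin n) (Fin n) ℂ := fun ys => ys.foldr Φ ρ₀ with hP
  -- L action on vectorization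
  have hLvec : ∀ y (M : Matrix (Fin n) (Fin n) ℂ),
      (L y).mulVec (vecCol M) = vecCol (Φ y M) := by
    intro y M
    rw [hL y, sum_mulVec']
    have : vecCol (Φ y M) = ∑ w, vecCol (K y w * M * (K y w)ᴴ) := by
      funext p; simp [vecCol, hΦ, Matrix.sum_apply]
    rw [this]
    exact Finset.sum_congr rfl fun w _ => kron_mulVec _ _
  have key : ∀ ys : List O, (ys.map L).prod.mulVec (vecCol ρ₀) = vecCol (P ys) := by
    intro ys
    induction ys with
    | nil => simp [hP]
    | cons y t ih =>
        simp only [List.map_cons, List.prod_cons, hP, List.foldr_cons]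
        rw [← Matrix.mulVec_mulVec, ih, hLvec]
  have psdP : ∀ ys : List O, (P ys).PosSemidef := by
    intro ys
    induction ys with
    | nil => exact hρ
    | cons y t ih =>
        exact psd_sum _ _ fun w _ => ih.mul_mul_conjTranspose_same _
  have trsum : ∀ M : Matrix (Fin n) (Fin n) ℂ, ∑ y : O, (Φ y M).trace = M.trace := by
    intro M
    have h : ∑ y : O, (Φ y M).trace = ((∑ y : O, ∑ w, (K y w)ᴴ * K y w) * M).trace := by
      simp only [hΦ, Matrix.trace_sum, Finset.sum_mul]
      exact Finset.sum_congr rfl fun y _ => Finset.sum_congr rfl fun w _ => by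
        rw [Matrix.trace_mul_cycle]
    rw [h, hK, one_mul]
  have htrP : ∀ ys : List O, 0 ≤ (P ys).trace := fun ys => psd_trace_nonneg (psdP ys)
  have him : ∀ ys : List O, (P ys).trace.im = 0 := by
    intro ys
    have := htrP ys
    rw [Complex.le_def] at this
    simpa using this.2.symm
  have hre : ∀ ys : List O, 0 ≤ (P ys).trace.re := by
    intro ys
    have := htrP ys
    rw [Complex.le_def] at this
    simpa using this.1
  have hle : ∀ ys : List O, (P ys).trace.re ≤ 1 := by
    intro ys
    induction ys with
    | nil => simp [hP, htr]
    | cons y t ih =>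
        have h1 : ∑ y' : O, ((Φ y' (P t)).trace).re = (P t).trace.re := by
          rw [← Complex.re_sum]
          exact congrArg Complex.re (trsum (P t))
        have h2 : (Φ y (P t)).trace.re ≤ ∑ y' : O, ((Φ y' (P t)).trace).re := by
          refine Finset.single_le_sum (f := fun y' => ((Φ y' (P t)).trace).re) (fun y' _ => ?_) (Finset.mem_univ y)
          have hpsd : (Φ y' (P t)).PosSemidef :=
            psd_sum _ _ fun w _ => (psdP t).mul_mul_conjTranspose_same _
          have := psd_trace_nonneg hpsd
          rw [Complex.le_def] at this
          simpa using this.1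
        have : (P (y :: t)).trace.re ≤ (P t).trace.re := by
          rw [show P (y :: t) = Φ y (P t) from rfl]
          exact h2.trans (le_of_eq h1)
        exact this.trans ih
  refine ⟨?_, ?_, ?_⟩
  · rw [dot_vecCol, htr]
  · intro ys
    rw [key ys]
    simp only [hLvec, dot_vecCol]
    exact (trsum (P ys)).symm
  · intro ys
    rw [key ys, dot_vecCol]
    exact ⟨him ys, hre ys, hle ys⟩
end

section
/- Let κ₀ ∈ ℂ^{m×n} satisfy κ₀†κ₀ = I, let G ∈ ℂ^{m×n} be arbitrary, and set U = [G | κ₀], V = [κ₀ | −G] (both m×2n). For τ such that I + (τ/2)V†U is invertible, define γ(τ) = κ₀ − τ U (I + (τ/2) V†U)^{-1} V† κ₀. Then γ(τ)† γ(τ) = I for all such τ, i.e., the Wen–Yin retraction stays on the Stiefel manifold. -/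
open Matrix

theorem stmt17 {m n : ℕ} (κ₀ G : Matrix (Fin m) (Fin n) ℂ) (τ : ℝ)
    (hκ : κ₀ᴴ * κ₀ = 1)
    (U V : Matrix (Fin m) (Fin n ⊕ Fin n) ℂ)
    (hU : U = Matrix.fromCols G κ₀) (hV : V = Matrix.fromCols κ₀ (-G))
    (hinv : IsUnit (1 + ((τ / 2 : ℝ) : ℂ) • (Vᴴ * U)))
    (γ : Matrix (Fin m) (Fin n) ℂ)
    (hγ : γ = κ₀ - (τ : ℂ) • (U * (1 + ((τ / 2 : ℝ) : ℂ) • (Vᴴ * U))⁻¹ * (Vᴴ * κ₀))) :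
    γᴴ * γ = 1 := by
  set c : ℂ := ((τ / 2 : ℝ) : ℂ) with hc
  have hτc : (τ : ℂ) = 2 * c := by rw [hc]; push_cast; ring
  have hcstar : star c = c := by rw [hc]; exact Complex.conj_ofReal _
  set W : Matrix (Fin m) (Fin m) ℂ := U * Vᴴ with hW
  have hWH : Wᴴ = -W := by
    rw [hW, hU, hV]
    rw [conjTranspose_fromCols_eq_fromRows_conjTranspose,
      fromCols_mul_fromRows]
    simp only [conjTranspose_add, conjTranspose_mul, conjTranspose_neg,
      conjTranspose_conjTranspose, Matrix.mul_neg, Matrix.neg_mul, neg_add, neg_neg]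
    abel
  set M : Matrix (Fin n ⊕ Fin n) (Fin n ⊕ Fin n) ℂ := 1 + c • (Vᴴ * U) with hM
  have hMdet : IsUnit M.det := (Matrix.isUnit_iff_isUnit_det M).mp hinv
  have hMM : M * M⁻¹ = 1 := Matrix.mul_nonsing_inv M hMdet
  set A : Matrix (Fin m) (Fin m) ℂ := 1 + c • W with hA
  set B : Matrix (Fin m) (Fin m) ℂ := 1 - c • W with hB
  have hAdet : IsUnit A.det := by
    have : A = 1 + (c • U) * Vᴴ := by
      rw [hA, hW, Matrix.smul_mul]
    rw [this, Matrix.det_one_add_mul_comm]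
    have : Vᴴ * (c • U) = c • (Vᴴ * U) := Matrix.mul_smul _ _ _
    rw [this, ← hM]
    exact hMdet
  have hAH : Aᴴ = B := by
    rw [hA, hB, conjTranspose_add, conjTranspose_one, conjTranspose_smul,
      hcstar, hWH, smul_neg, ← sub_eq_add_neg]
  have hBdet : IsUnit B.det := by
    rw [← hAH, Matrix.det_conjTranspose]
    exact hAdet.star
  have hAB : A * B = B * A := by
    rw [hA, hB]
    simp only [Matrix.add_mul, Matrix.mul_sub, Matrix.sub_mul, Matrix.mul_add,
      Matrix.one_mul, Matrix.mul_one]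
    abel
  -- the key computation
  set T : Matrix (Fin m) (Fin n) ℂ := U * M⁻¹ * (Vᴴ * κ₀) with hT
  have key : T + c • (W * T) = W * κ₀ := by
    have h1 : U * (M * M⁻¹) * (Vᴴ * κ₀) = W * κ₀ := by
      rw [hMM, Matrix.mul_one, hW, Matrix.mul_assoc]
    calc T + c • (W * T)
        = U * (M * M⁻¹) * (Vᴴ * κ₀) := by
          rw [hT, hW, hM]
          simp only [Matrix.add_mul, Matrix.mul_add, Matrix.one_mul,
            Matrix.mul_one, Matrix.smul_mul, Matrix.mul_smul, Matrix.mul_assoc]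
      _ = W * κ₀ := h1
  have hAγ : A * γ = B * κ₀ := by
    rw [hγ, hτc, hA, hB]
    have : (2 * c) • T = c • T + c • T := by
      rw [two_mul, add_smul]
    rw [this]
    simp only [Matrix.add_mul, Matrix.mul_sub, Matrix.sub_mul, Matrix.one_mul,
      Matrix.mul_add, Matrix.mul_smul, smul_add, Matrix.smul_mul]
    have h2 : c • T + c • c • (W * T) = c • (W * κ₀) := by
      rw [← smul_add, key]
    rw [h2]
    abel
  have hγ2 : γ = A⁻¹ * (B * κ₀) := by
    rw [← hAγ, ← Matrix.mul_assoc, Matrix.nonsing_inv_mul A hAdet, Matrix.one_mul]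
  have hBH : Bᴴ = A := by rw [← hAH, conjTranspose_conjTranspose]
  have h1 : B⁻¹ * A⁻¹ = A⁻¹ * B⁻¹ := by
    rw [← Matrix.mul_inv_rev, hAB, Matrix.mul_inv_rev]
  rw [hγ2, conjTranspose_mul, conjTranspose_mul, Matrix.conjTranspose_nonsing_inv,
    hAH, hBH]
  calc κ₀ᴴ * A * B⁻¹ * (A⁻¹ * (B * κ₀))
      = κ₀ᴴ * ((A * (B⁻¹ * A⁻¹)) * (B * κ₀)) := by simp only [Matrix.mul_assoc]
    _ = κ₀ᴴ * ((A * (A⁻¹ * B⁻¹)) * (B * κ₀)) := by rw [h1]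
    _ = κ₀ᴴ * κ₀ := by
        rw [← Matrix.mul_assoc A A⁻¹, Matrix.mul_nonsing_inv A hAdet, Matrix.one_mul,
          ← Matrix.mul_assoc B⁻¹ B, Matrix.nonsing_inv_mul B hBdet, Matrix.one_mul]
    _ = 1 := hκ
end
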